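/- arXiv:1801.09283 — 3 statements merged into one kernel-verified Lean document; each statement's English description precedes it below -/
import Mathlib

section
/- Let p be a prime number and let δ be a real number with 0 < δ < 1/2. Then there exists a natural number N such that for every natural number n ≥ N the following holds: if V is a finite-dimensional vector space over ZMod p and f : (Fin n → ZMod p) → V is a map such that every element of V equals f(v) for some v of Hamming weight |{i : v i ≠ 0}| ≤ δ·n, then p^{dim V} ≤ p^{3δn} · δ^{−δn}; in particular (dim V)·log p ≤ δ·(3·log p − log δ)·n, with natural logarithms and real powers. -/
open Finset in
/-- Counting: the Hamming ball of radius `m` in `(Fin n → ZMod p)` has at most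
`P.card * p ^ m` elements, where `P` is the family of subsets of size at most `m`. -/
lemma hamming_ball_card_le (p n m : ℕ) [NeZero p] :
    ((Finset.univ.filter fun v : Fin n → ZMod p =>
        (Finset.univ.filter fun i => v i ≠ 0).card ≤ m).card : ℕ) ≤
      ((Finset.univ : Finset (Fin n)).powerset.filter fun S => S.card ≤ m).card * p ^ m := by
  classical
  set P := ((Finset.univ : Finset (Fin n)).powerset.filter fun S => S.card ≤ m) with hP
  have hsub : (Finset.univ.filter fun v : Fin n → ZMod p =>
      (Finset.univ.filter fun i => v i ≠ 0).card ≤ m) ⊆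
      P.biUnion (fun S => Fintype.piFinset fun i =>
        if i ∈ S then (Finset.univ : Finset (ZMod p)) else {0}) := by
    intro v hv
    simp only [mem_filter, mem_univ, true_and] at hv
    refine mem_biUnion.2 ⟨Finset.univ.filter fun i => v i ≠ 0, ?_, ?_⟩
    · simp [hP, hv]
    · rw [Fintype.mem_piFinset]
      intro i
      by_cases h : v i = 0 <;> simp [h]
  refine (Finset.card_le_card hsub).trans ?_
  refine (Finset.card_biUnion_le).trans ?_
  have hbound : ∀ S ∈ P, (Fintype.piFinset fun i =>
      if i ∈ S then (Finset.univ : Finset (ZMod p)) else {0}).card ≤ p ^ m := by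
    intro S hS
    simp only [hP, mem_filter, mem_powerset] at hS
    rw [Fintype.card_piFinset]
    have : ∀ i : Fin n, (if i ∈ S then (Finset.univ : Finset (ZMod p)) else {0}).card
        = if i ∈ S then p else 1 := by
      intro i; by_cases h : i ∈ S <;> simp [h, ZMod.card]
    rw [Finset.prod_congr rfl fun i _ => this i]
    rw [Finset.prod_ite_mem, Finset.univ_inter, Finset.prod_const]
    exact Nat.pow_le_pow_right (NeZero.pos p) hS.2
  calc ∑ S ∈ P, (Fintype.piFinset fun i =>
        if i ∈ S then (Finset.univ : Finset (ZMod p)) else {0}).card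
      ≤ ∑ _S ∈ P, p ^ m := Finset.sum_le_sum hbound
    _ = P.card * p ^ m := by rw [Finset.sum_const, smul_eq_mul]

open Finset in
/-- Chernoff-type bound: the number of subsets of `Fin n` of size at most `m`
times `δ ^ m` is at most `(1 + δ) ^ n`, for `0 < δ ≤ 1`. -/
lemma subsets_card_le (n m : ℕ) {δ : ℝ} (hδ0 : 0 < δ) (hδ1 : δ ≤ 1) :
    ((((Finset.univ : Finset (Fin n)).powerset.filter fun S => S.card ≤ m).card : ℝ)) * δ ^ m
      ≤ (1 + δ) ^ n := by
  classical
  set P := ((Finset.univ : Finset (Fin n)).powerset.filter fun S => S.card ≤ m) with hP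
  have h1 : (P.card : ℝ) * δ ^ m = ∑ _S ∈ P, δ ^ m := by
    rw [Finset.sum_const, nsmul_eq_mul]
  have h2 : ∑ _S ∈ P, δ ^ m ≤ ∑ S ∈ P, δ ^ S.card := by
    refine Finset.sum_le_sum fun S hS => ?_
    simp only [hP, mem_filter, mem_powerset] at hS
    exact pow_le_pow_of_le_one hδ0.le hδ1 hS.2
  have h3 : ∑ S ∈ P, δ ^ S.card ≤
      ∑ S ∈ (Finset.univ : Finset (Fin n)).powerset, δ ^ S.card := by
    refine Finset.sum_le_sum_of_subset_of_nonneg (Finset.filter_subset _ _)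
      fun S _ _ => by positivity
  have h4 : ∑ S ∈ (Finset.univ : Finset (Fin n)).powerset, δ ^ S.card = (δ + 1) ^ n := by
    have := Finset.prod_add (fun _ : Fin n => δ) (fun _ : Fin n => (1:ℝ)) Finset.univ
    simp only [Finset.prod_const, one_pow, mul_one, Finset.card_univ,
      Fintype.card_fin] at this
    exact this.symm
  rw [h1]
  calc ∑ _S ∈ P, δ ^ m ≤ ∑ S ∈ P, δ ^ S.card := h2
    _ ≤ ∑ S ∈ (Finset.univ : Finset (Fin n)).powerset, δ ^ S.card := h3
    _ = (δ + 1) ^ n := h4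
    _ = (1 + δ) ^ n := by ring

/-- Abstract counting core of Proposition 2.1 of the paper: if every element of a
finite-dimensional `ZMod p`-vector space `V` is the image under `f` of a vector of
Hamming weight at most `δn`, then `p^{dim V} ≤ p^{3δn}·δ^{-δn}`, and in particular
`(dim V)·log p ≤ δ(3 log p − log δ)·n`. -/
theorem dim_bound_of_short_representatives (p : ℕ) [hp : Fact p.Prime] (δ : ℝ)
    (hδ0 : 0 < δ) (hδ : δ < 1/2) :
    ∃ N : ℕ, ∀ n : ℕ, N ≤ n →
      ∀ (V : Type) [AddCommGroup V] [Module (ZMod p) V] [FiniteDimensional (ZMod p) V]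
        (f : (Fin n → ZMod p) → V),
        (∀ w : V, ∃ v : Fin n → ZMod p,
            ((Finset.univ.filter fun i => v i ≠ 0).card : ℝ) ≤ δ * n ∧ f v = w) →
        (p : ℝ) ^ (Module.finrank (ZMod p) V) ≤ (p : ℝ) ^ (3 * δ * n) * δ ^ (-(δ * n)) ∧
        (Module.finrank (ZMod p) V : ℝ) * Real.log p
          ≤ δ * (3 * Real.log p - Real.log δ) * n := by
  classical
  refine ⟨0, fun n _ V _ _ _ f hf => ?_⟩
  have hp2 : 2 ≤ p := hp.out.two_le
  have hp0 : (0:ℝ) < p := by exact_mod_cast hp.out.pos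
  have hp1 : (1:ℝ) ≤ p := by exact_mod_cast hp.out.one_le
  have hδ1 : δ ≤ 1 := by linarith
  set m : ℕ := ⌊δ * n⌋₊ with hm
  have hδn0 : (0:ℝ) ≤ δ * n := by positivity
  have hmle : (m:ℝ) ≤ δ * n := Nat.floor_le hδn0
  haveI : NeZero p := ⟨hp.out.pos.ne'⟩
  haveI : Finite V := Module.finite_of_finite (ZMod p)
  haveI : Fintype V := Fintype.ofFinite V
  set B := (Finset.univ.filter fun v : Fin n → ZMod p =>
      (Finset.univ.filter fun i => v i ≠ 0).card ≤ m) with hB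
  -- V is covered by the image of the Hamming ball B
  have hVB : Fintype.card V ≤ B.card := by
    rw [← Finset.card_univ]
    refine Finset.card_le_card_of_surjOn f ?_
    intro w _
    obtain ⟨v, hv, hfv⟩ := hf w
    exact ⟨v, by simp only [hB, Finset.coe_filter, Set.mem_setOf_eq, Finset.mem_coe, Finset.mem_filter, Finset.mem_univ, true_and]; exact Nat.le_floor hv, hfv⟩
  set P := ((Finset.univ : Finset (Fin n)).powerset.filter fun S => S.card ≤ m) with hP
  have hball : B.card ≤ P.card * p ^ m := hamming_ball_card_le p n m
  have hchern : (P.card : ℝ) * δ ^ m ≤ (1 + δ) ^ n := subsets_card_le n m hδ0 hδ1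
  have hδm : (0:ℝ) < δ ^ m := by positivity
  -- the main real-number cardinality bound
  have hcardV : (Fintype.card V : ℝ) ≤ (1 + δ) ^ n / δ ^ m * (p:ℝ) ^ m := by
    have h1 : (Fintype.card V : ℝ) ≤ (P.card : ℝ) * (p:ℝ) ^ m := by
      calc (Fintype.card V : ℝ) ≤ (B.card : ℝ) := by exact_mod_cast hVB
        _ ≤ ((P.card * p ^ m : ℕ) : ℝ) := by exact_mod_cast hball
        _ = (P.card : ℝ) * (p:ℝ) ^ m := by push_cast; ring
    refine h1.trans ?_
    have hPle : (P.card : ℝ) ≤ (1 + δ) ^ n / δ ^ m :=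
      (le_div_iff₀ hδm).2 hchern
    exact mul_le_mul_of_nonneg_right hPle (by positivity)
  -- bound each factor by the corresponding rpow expression
  have hA1 : ((p:ℝ)) ^ m ≤ (p:ℝ) ^ (δ * n) := by
    rw [← Real.rpow_natCast (p:ℝ) m]
    exact Real.rpow_le_rpow_of_exponent_le hp1 hmle
  have hA3 : ((δ:ℝ) ^ m)⁻¹ ≤ δ ^ (-(δ * n)) := by
    rw [← Real.rpow_natCast δ m, ← Real.rpow_neg hδ0.le]
    exact Real.rpow_le_rpow_of_exponent_ge hδ0 hδ1 (by linarith)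
  have hA2 : ((1:ℝ) + δ) ^ n ≤ (p:ℝ) ^ (2 * δ * n) := by
    have h1 : ((1:ℝ) + δ) ^ n ≤ Real.exp (δ * n) := by
      calc ((1:ℝ) + δ) ^ n ≤ (Real.exp δ) ^ n := by
            refine pow_le_pow_left₀ (by positivity) ?_ n
            have := Real.add_one_le_exp δ; linarith
        _ = Real.exp (δ * n) := by
            rw [← Real.exp_nat_mul]; ring_nf
    refine h1.trans ?_
    rw [Real.rpow_def_of_pos hp0]
    refine Real.exp_le_exp.2 ?_
    have hlogp : (1:ℝ)/2 ≤ Real.log p := by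
      have h2 : Real.log 2 ≤ Real.log p := by
        apply Real.log_le_log (by norm_num)
        exact_mod_cast hp2
      have := Real.log_two_gt_d9
      linarith
    nlinarith [hδn0, hlogp]
  -- assemble the first inequality
  have hfirst : (p : ℝ) ^ (Module.finrank (ZMod p) V) ≤
      (p : ℝ) ^ (3 * δ * n) * δ ^ (-(δ * n)) := by
    have hcard : (Fintype.card V : ℝ) = (p:ℝ) ^ (Module.finrank (ZMod p) V) := by
      have := Module.card_eq_pow_finrank (K := ZMod p) (V := V)
      rw [ZMod.card] at this
      exact_mod_cast congrArg (Nat.cast : ℕ → ℝ) this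
    rw [← hcard]
    refine hcardV.trans ?_
    have key : (1 + δ) ^ n / δ ^ m * (p:ℝ) ^ m
        ≤ (p:ℝ) ^ (2 * δ * n) * δ ^ (-(δ * n)) * (p:ℝ) ^ (δ * n) := by
      rw [div_eq_mul_inv]
      have h12 : ((1:ℝ) + δ) ^ n * ((δ:ℝ) ^ m)⁻¹ ≤ (p:ℝ) ^ (2 * δ * n) * δ ^ (-(δ * n)) :=
        mul_le_mul hA2 hA3 (by positivity) (by positivity)
      exact mul_le_mul h12 hA1 (by positivity) (by positivity)
    refine key.trans (le_of_eq ?_)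
    rw [mul_comm ((p:ℝ) ^ (2 * δ * n)) (δ ^ (-(δ * n))), mul_assoc,
      ← Real.rpow_add hp0]
    ring_nf
  refine ⟨hfirst, ?_⟩
  -- take logarithms
  have hpowpos : (0:ℝ) < (p : ℝ) ^ (Module.finrank (ZMod p) V) := by positivity
  have hlog := Real.log_le_log hpowpos hfirst
  rw [Real.log_pow] at hlog
  have hrpos : (0:ℝ) < (p : ℝ) ^ (3 * δ * n) := Real.rpow_pos_of_pos hp0 _
  have hrpos2 : (0:ℝ) < (δ:ℝ) ^ (-(δ * n)) := Real.rpow_pos_of_pos hδ0 _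
  rw [Real.log_mul hrpos.ne' hrpos2.ne', Real.log_rpow hp0, Real.log_rpow hδ0] at hlog
  calc (Module.finrank (ZMod p) V : ℝ) * Real.log p
      ≤ 3 * δ * n * Real.log p + -(δ * n) * Real.log δ := hlog
    _ = δ * (3 * Real.log p - Real.log δ) * n := by ring
end

section
/- Let d ≥ 2 be a natural number and let κ₁, κ₂ be real numbers with 0 < κ₁ < 1 and 0 < κ₂ < 1. Then there exists a constant C > 0 such that for every real number R ≥ 2(1+κ₁+κ₂) and all points x', x'' of EuclideanSpace ℝ (Fin d) with dist x' x'' = 2(R − κ₁/2 − κ₂), writing m = (x'+x'')/2 for their midpoint, the Lebesgue volume of the set { y : dist y x' + dist y x'' < 2R + κ₂/2 } ∩ closedBall m (R − κ₁/2) is at least C · R^{(d+1)/2}, where R^{(d+1)/2} is a real power. -/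
open MeasureTheory

lemma aux_sqrt_le (A B w s : ℝ) (hA : 0 < A) (hsA : s ≤ A) (hB : |B| ≤ s)
    (hw : w ≤ s^2) : Real.sqrt (A^2 + 2*A*B + w) ≤ A + B + s^2/(2*A) := by
  have hB' := abs_le.mp hB
  have h2A : (0:ℝ) < 2*A := by linarith
  have hq : 2*A*(s^2/(2*A)) = s^2 := by field_simp
  have hRHS : 0 ≤ A + B + s^2/(2*A) := by
    have : 0 ≤ s^2/(2*A) := div_nonneg (sq_nonneg s) h2A.le
    linarith
  calc Real.sqrt (A^2 + 2*A*B + w) ≤ Real.sqrt ((A + B + s^2/(2*A))^2) := by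
        apply Real.sqrt_le_sqrt
        nlinarith [sq_nonneg (B + s^2/(2*A))]
    _ = A + B + s^2/(2*A) := Real.sqrt_sq hRHS

lemma aux_ball_est {E : Type*} [NormedAddCommGroup E] [InnerProductSpace ℝ E]
    (m u : E) (hu : ‖u‖ = 1) {c s t : ℝ} (hc : 0 < c) (hs0 : 0 < s) (hsc : s ≤ c/4)
    (ht0 : 0 ≤ t) (ht : t ≤ c/2) {y : E} (hy : y ∈ Metric.ball (m + t • u) s) :
    dist y (m - c • u) + dist y (m + c • u) ≤ 2*c + 2*(s^2/c) ∧ dist y m ≤ 3*c/4 := by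
  set v := y - (m + t • u) with hvdef
  have hv : ‖v‖ < s := by
    rw [Metric.mem_ball, dist_eq_norm] at hy; exact hy
  set B := (inner ℝ u v : ℝ) with hBdef
  have hB : |(B:ℝ)| ≤ s := by
    calc |(B:ℝ)| ≤ ‖u‖ * ‖v‖ := abs_real_inner_le_norm u v
      _ = ‖v‖ := by rw [hu, one_mul]
      _ ≤ s := hv.le
  have hw : ‖v‖^2 ≤ s^2 := by nlinarith [norm_nonneg v]
  have e1 : y - (m - c • u) = (c+t) • u + v := by rw [hvdef]; module
  have hn1 : dist y (m - c • u) ≤ (c+t) + B + s^2/(2*(c+t)) := by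
    have hsq : ‖y - (m - c•u)‖^2 = (c+t)^2 + 2*(c+t)*B + ‖v‖^2 := by
      rw [e1, norm_add_sq_real, real_inner_smul_left, norm_smul, hu, mul_one,
        Real.norm_eq_abs, abs_of_nonneg (by linarith : (0:ℝ) ≤ c+t)]
      ring
    rw [dist_eq_norm, ← Real.sqrt_sq (norm_nonneg (y - (m - c•u))), hsq]
    exact aux_sqrt_le (c+t) B (‖v‖^2) s (by linarith) (by linarith) hB hw
  have e2 : y - (m + c • u) = (t-c) • u + v := by rw [hvdef]; module
  have hn2 : dist y (m + c • u) ≤ (c-t) + (-B) + s^2/(2*(c-t)) := by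
    have hsq : ‖y - (m + c•u)‖^2 = (c-t)^2 + 2*(c-t)*(-B) + ‖v‖^2 := by
      rw [e2, norm_add_sq_real, real_inner_smul_left, norm_smul, hu, mul_one,
        Real.norm_eq_abs, abs_of_nonpos (by linarith : (t:ℝ)-c ≤ 0)]
      ring
    rw [dist_eq_norm, ← Real.sqrt_sq (norm_nonneg (y - (m + c•u))), hsq]
    exact aux_sqrt_le (c-t) (-B) (‖v‖^2) s (by linarith) (by linarith) (by rwa [abs_neg]) hw
  constructor
  · have d1 : s^2/(2*(c+t)) ≤ s^2/c := by
      apply div_le_div_of_nonneg_left (sq_nonneg s) hc; linarith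
    have d2 : s^2/(2*(c-t)) ≤ s^2/c := by
      apply div_le_div_of_nonneg_left (sq_nonneg s) hc; linarith
    linarith
  · have e3 : y - m = t • u + v := by rw [hvdef]; module
    rw [dist_eq_norm, e3]
    calc ‖t • u + v‖ ≤ ‖t • u‖ + ‖v‖ := norm_add_le _ _
      _ ≤ t + s := by
          rw [norm_smul, Real.norm_eq_abs, hu, mul_one, abs_of_nonneg ht0]
          linarith
      _ ≤ 3*c/4 := by linarith

set_option maxHeartbeats 1000000 in
/-- Euclidean volume estimate at the core of Lemma 3.4 of the paper: for `d ≥ 2` and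
`0 < κ₁, κ₂ < 1` there is `C > 0` such that for all `R ≥ 2(1+κ₁+κ₂)` and foci `x', x''`
at distance `2(R-κ₁/2-κ₂)`, the solid open ellipsoid with sum-of-distances bound
`2R+κ₂/2` intersected with the closed ball of radius `R-κ₁/2` about the midpoint of the
foci has volume at least `C·R^{(d+1)/2}`. -/
theorem ellipsoid_cap_volume_lower_bound (d : ℕ) (hd : 2 ≤ d) (κ₁ κ₂ : ℝ)
    (h10 : 0 < κ₁) (h11 : κ₁ < 1) (h20 : 0 < κ₂) (h21 : κ₂ < 1) :
    ∃ C : ℝ, 0 < C ∧ ∀ R : ℝ, 2 * (1 + κ₁ + κ₂) ≤ R →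
      ∀ x' x'' : EuclideanSpace ℝ (Fin d), dist x' x'' = 2 * (R - κ₁ / 2 - κ₂) →
        ENNReal.ofReal (C * R ^ (((d : ℝ) + 1) / 2)) ≤
          volume ({y : EuclideanSpace ℝ (Fin d) | dist y x' + dist y x'' < 2 * R + κ₂ / 2}
            ∩ Metric.closedBall (midpoint ℝ x' x'') (R - κ₁ / 2)) := by
  haveI : Nonempty (Fin d) := ⟨⟨0, by omega⟩⟩
  set q : ℝ := ((d : ℝ) + 1) / 2 with hqdef
  set q' : ℝ := ((d : ℝ) - 1) / 2 with hq'def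
  set ω : ℝ := Real.sqrt Real.pi ^ d / Real.Gamma ((d : ℝ) / 2 + 1) with hωdef
  have hω : 0 < ω := by
    apply div_pos (pow_pos (Real.sqrt_pos.mpr Real.pi_pos) d)
    exact Real.Gamma_pos_of_pos (by positivity)
  refine ⟨ω * (κ₁/8) ^ q' * (2:ℝ) ^ (-q) / 4, by positivity, ?_⟩
  intro R hR x' x'' hdist
  set c : ℝ := R - κ₁/2 - κ₂ with hcdef
  have hR2 : (2:ℝ) ≤ R := by linarith
  have hc2 : (2:ℝ) ≤ c := by rw [hcdef]; linarith
  have hc0 : (0:ℝ) < c := by linarith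
  have hcR2 : R/2 ≤ c := by rw [hcdef]; linarith
  have hcR : c ≤ R := by rw [hcdef]; linarith
  set s : ℝ := Real.sqrt (c*κ₁/8) with hsdef
  have hs2 : s^2 = c*κ₁/8 := Real.sq_sqrt (by positivity)
  have hs0 : 0 < s := Real.sqrt_pos.mpr (by positivity)
  have hsc : s ≤ c/4 := by
    have h1 : c*κ₁/8 ≤ (c/4)^2 := by nlinarith
    calc s ≤ Real.sqrt ((c/4)^2) := Real.sqrt_le_sqrt h1
      _ = c/4 := Real.sqrt_sq (by linarith)
  set m := midpoint ℝ x' x'' with hmdef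
  have hnorm : ‖x'' - x'‖ = 2*c := by
    rw [← dist_eq_norm, dist_comm, hdist]
  set u : EuclideanSpace ℝ (Fin d) := (2*c)⁻¹ • (x'' - x') with hudef
  have hu : ‖u‖ = 1 := by
    rw [hudef, norm_smul, hnorm, norm_inv, Real.norm_eq_abs,
      abs_of_pos (by linarith : (0:ℝ) < 2*c)]
    field_simp
  have hcu : c • u = (2:ℝ)⁻¹ • (x'' - x') := by
    rw [hudef, smul_smul]; congr 1; field_simp
  have hmhalf : m = (2:ℝ)⁻¹ • (x' + x'') := by
    rw [hmdef, midpoint_eq_smul_add, invOf_eq_inv]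
  have hx' : m - c • u = x' := by rw [hcu, hmhalf]; module
  have hx'' : m + c • u = x'' := by rw [hcu, hmhalf]; module
  -- containment of the small balls
  have hsub : ∀ t : ℝ, 0 ≤ t → t ≤ c/2 →
      Metric.ball (m + t • u) s ⊆
        ({y : EuclideanSpace ℝ (Fin d) | dist y x' + dist y x'' < 2 * R + κ₂ / 2}
          ∩ Metric.closedBall m (R - κ₁ / 2)) := by
    intro t ht0 ht1 y hy
    obtain ⟨h1, h2⟩ := aux_ball_est m u hu hc0 hs0 hsc ht0 ht1 hy
    rw [hx', hx''] at h1
    have hs2c : 2*(s^2/c) = κ₁/4 := by rw [hs2]; field_simp; ring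
    constructor
    · show dist y x' + dist y x'' < 2 * R + κ₂ / 2
      rw [hs2c] at h1
      have : 2*c = 2*R - κ₁ - 2*κ₂ := by rw [hcdef]; ring
      linarith
    · rw [Metric.mem_closedBall]
      have : c ≤ R := hcR
      linarith
  -- the family of disjoint balls
  set N : ℕ := Nat.floor (c/(4*s)) + 1 with hNdef
  set p : ℕ → EuclideanSpace ℝ (Fin d) := fun k => m + ((2*s)*(k:ℝ)) • u with hpdef
  have hNge : c/(4*s) ≤ (N:ℝ) := by
    rw [hNdef]; push_cast; exact (Nat.lt_floor_add_one _).le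
  have hkrange : ∀ k ∈ Finset.range N, (2*s)*(k:ℝ) ≤ c/2 := by
    intro k hk
    have hk' : k ≤ Nat.floor (c/(4*s)) := by
      have := Finset.mem_range.mp hk; omega
    have h1 : (k:ℝ) ≤ c/(4*s) := by
      calc (k:ℝ) ≤ (Nat.floor (c/(4*s)) : ℝ) := by exact_mod_cast hk'
        _ ≤ c/(4*s) := Nat.floor_le (by positivity)
    calc (2*s)*(k:ℝ) ≤ (2*s)*(c/(4*s)) := by
          apply mul_le_mul_of_nonneg_left h1 (by positivity)
      _ = c/2 := by field_simp; ring
  have hdisj : Set.PairwiseDisjoint (↑(Finset.range N) : Set ℕ)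
      (fun k => Metric.ball (p k) s) := by
    intro j _ k _ hjk
    apply Metric.ball_disjoint_ball
    have e : p j - p k = ((2*s)*((j:ℝ) - (k:ℝ))) • u := by rw [hpdef]; simp only; module
    rw [dist_eq_norm, e, norm_smul, Real.norm_eq_abs, hu, mul_one]
    have h1 : (1:ℝ) ≤ |(j:ℝ)-(k:ℝ)| := by
      rcases lt_or_gt_of_ne hjk with h | h
      · have : (j:ℝ) + 1 ≤ (k:ℝ) := by exact_mod_cast Nat.succ_le_of_lt h
        rw [abs_sub_comm, abs_of_nonneg (by linarith)]; linarith
      · have : (k:ℝ) + 1 ≤ (j:ℝ) := by exact_mod_cast Nat.succ_le_of_lt h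
        rw [abs_of_nonneg (by linarith)]; linarith
    rw [abs_mul, abs_of_nonneg (by positivity : (0:ℝ) ≤ 2*s)]
    have h2 : (2*s)*1 ≤ (2*s)*|(j:ℝ)-(k:ℝ)| :=
      mul_le_mul_of_nonneg_left h1 (by positivity)
    linarith
  have hVsum : ∑ k ∈ Finset.range N, volume (Metric.ball (p k) s)
      = ENNReal.ofReal ((N:ℝ) * (s^d * ω)) := by
    have hb : ∀ k, volume (Metric.ball (p k) s) = ENNReal.ofReal (s^d * ω) := by
      intro k
      rw [EuclideanSpace.volume_ball, Fintype.card_fin, ← ENNReal.ofReal_pow hs0.le,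
        ← ENNReal.ofReal_mul (by positivity)]
    rw [Finset.sum_congr rfl (fun k _ => hb k), Finset.sum_const, Finset.card_range,
      nsmul_eq_mul, ← ENNReal.ofReal_natCast N, ← ENNReal.ofReal_mul (Nat.cast_nonneg N)]
  -- the real-number inequality
  have hreal : ω * (κ₁/8) ^ q' * (2:ℝ) ^ (-q) / 4 * R ^ q ≤ (N:ℝ) * (s^d * ω) := by
    have e_sd : s^d = s^(d-1) * s := by
      rw [← pow_succ]; congr 1; omega
    have e_sd1 : s^(d-1) = c^q' * (κ₁/8)^q' := by
      have h1 : s^(d-1) = (c*κ₁/8) ^ (((d-1 : ℕ):ℝ)/2) := by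
        rw [hsdef, Real.sqrt_eq_rpow, ← Real.rpow_natCast ((c*κ₁/8) ^ ((1:ℝ)/2)) (d-1),
          ← Real.rpow_mul (by positivity)]
        congr 1; ring
      rw [h1]
      have h2 : ((d-1 : ℕ):ℝ) = (d:ℝ) - 1 := by
        have : (1:ℕ) ≤ d := by omega
        push_cast [Nat.cast_sub this]; ring
      rw [h2, show ((d:ℝ)-1)/2 = q' from rfl, show c*κ₁/8 = c*(κ₁/8) by ring,
        Real.mul_rpow hc0.le (by positivity)]
    have e_cq : c * c^q' = c^q := by
      rw [show q = 1 + q' by rw [hqdef, hq'def]; ring, Real.rpow_add hc0, Real.rpow_one]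
    have e_Rq : (2:ℝ)^(-q) * R^q ≤ c^q := by
      have h1 : (R/2) ^ q ≤ c ^ q :=
        Real.rpow_le_rpow (by linarith) hcR2 (by rw [hqdef]; positivity)
      have h2 : (R/2)^q = (2:ℝ)^(-q) * R^q := by
        rw [Real.div_rpow (by linarith) (by norm_num), Real.rpow_neg (by norm_num)]
        ring
      linarith [h2 ▸ h1]
    calc ω * (κ₁/8) ^ q' * (2:ℝ) ^ (-q) / 4 * R ^ q
        = (ω * (κ₁/8)^q' / 4) * ((2:ℝ)^(-q) * R^q) := by ring
      _ ≤ (ω * (κ₁/8)^q' / 4) * c^q := by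
          apply mul_le_mul_of_nonneg_left e_Rq
          positivity
      _ = (c/(4*s)) * (s^d * ω) := by
          rw [← e_cq, e_sd, e_sd1]; field_simp
      _ ≤ (N:ℝ) * (s^d * ω) := by
          apply mul_le_mul_of_nonneg_right hNge
          positivity
  -- put everything together
  calc ENNReal.ofReal (ω * (κ₁/8) ^ q' * (2:ℝ) ^ (-q) / 4 * R ^ q)
      ≤ ENNReal.ofReal ((N:ℝ) * (s^d * ω)) := ENNReal.ofReal_le_ofReal hreal
    _ = ∑ k ∈ Finset.range N, volume (Metric.ball (p k) s) := hVsum.symm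
    _ = volume (⋃ k ∈ Finset.range N, Metric.ball (p k) s) :=
        (measure_biUnion_finset hdisj (fun k _ => measurableSet_ball)).symm
    _ ≤ volume ({y : EuclideanSpace ℝ (Fin d) | dist y x' + dist y x'' < 2 * R + κ₂ / 2}
            ∩ Metric.closedBall m (R - κ₁ / 2)) := by
        apply measure_mono
        apply Set.iUnion₂_subset
        intro k hk
        exact hsub _ (by positivity) (hkrange k hk)
end

section
/- Let d ≥ 2 be a natural number, let R' > 0 be a real number, and let p₁, q₁, p₂, q₂ be points of EuclideanSpace ℝ (Fin d) with ‖p₁‖ = ‖q₁‖ = ‖p₂‖ = ‖q₂‖ = R'. Suppose that for each i ∈ {1,2} there is a point xᵢ on the segment [pᵢ, qᵢ] with ‖xᵢ‖ ≤ R'/5. Then min( dist p₁ p₂ + dist q₁ q₂ , dist p₁ q₂ + dist q₁ p₂ ) ≤ dist p₁ q₁ + dist p₂ q₂ − R'/10. -/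
open scoped RealInnerProductSpace

set_option maxHeartbeats 1000000 in
private lemma chord_inner_aux (d : ℕ) (R' : ℝ) (hR' : 0 < R')
    (p q : EuclideanSpace ℝ (Fin d))
    (hp : ‖p‖ = R') (hq : ‖q‖ = R')
    (h : ∃ x ∈ segment ℝ p q, ‖x‖ ≤ R' / 5) :
    ⟪p, q⟫ ≤ -(23/25) * R'^2 := by
  obtain ⟨x, hx, hxn⟩ := h
  obtain ⟨a, b, ha, hb, hab, rfl⟩ := hx
  have hx0 : (0:ℝ) ≤ ‖a • p + b • q‖ := norm_nonneg _
  have hnorm2 : ‖a • p + b • q‖^2 = a^2*R'^2 + 2*(a*b)*⟪p,q⟫ + b^2*R'^2 := by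
    rw [norm_add_sq_real, norm_smul, norm_smul, real_inner_smul_left,
      real_inner_smul_right, hp, hq]
    rw [Real.norm_of_nonneg ha, Real.norm_of_nonneg hb]
    ring
  -- |a - b| ≤ 1/5
  have h1 : a * R' - b * R' ≤ ‖a • p + b • q‖ := by
    have := norm_sub_le (a • p + b • q) (b • q)
    rw [add_sub_cancel_right, norm_smul, norm_smul, Real.norm_of_nonneg ha,
      Real.norm_of_nonneg hb, hp, hq] at this
    linarith
  have h2 : b * R' - a * R' ≤ ‖a • p + b • q‖ := by
    have e : a • p + b • q - a • p = b • q := by abel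
    have := norm_sub_le (a • p + b • q) (a • p)
    rw [e, norm_smul, norm_smul, Real.norm_of_nonneg ha,
      Real.norm_of_nonneg hb, hp, hq] at this
    linarith
  have hd1 : (a - b) * R' ≤ R' / 5 := by linarith
  have hd2 : (b - a) * R' ≤ R' / 5 := by linarith
  have hab1 : a - b ≤ 1/5 := by nlinarith
  have hab2 : b - a ≤ 1/5 := by nlinarith
  have hprod : (6:ℝ)/25 ≤ a * b := by nlinarith [sq_nonneg (a-b)]
  have hprod' : a * b ≤ 1/4 := by nlinarith [sq_nonneg (a-b)]
  have hsq : ‖a • p + b • q‖^2 ≤ (R'/5)^2 := by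
    have : (0:ℝ) ≤ R'/5 := by linarith
    nlinarith
  rw [hnorm2] at hsq
  have hDpos : (0:ℝ) < 2 * (a * b) := by nlinarith
  have habsq : a^2 + b^2 = 1 - 2*(a*b) := by linear_combination (a + b + 1) * hab
  have hmul : (a^2 + b^2) * R'^2 = (1 - 2*(a*b)) * R'^2 := by rw [habsq]
  have hD : 2 * (a * b) * ⟪p, q⟫ ≤ (2 * (a * b) - 24/25) * R'^2 := by nlinarith [hmul]
  by_contra hcon
  push_neg at hcon
  have h3 := mul_lt_mul_of_pos_left hcon hDpos
  have k : a*b*R'^2 ≤ 1/4 * R'^2 := mul_le_mul_of_nonneg_right hprod' (sq_nonneg R')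
  nlinarith [k, h3, hD]

/-- Quantitative Euclidean surgery step of Lemma 3.3 of the paper: two chords of the
sphere of radius `R'` both passing within `R'/5` of the center can be cut and reconnected
in one of the two possible ways so that the total length decreases by at least `R'/10`. -/
theorem chord_surgery (d : ℕ) (hd : 2 ≤ d) (R' : ℝ) (hR' : 0 < R')
    (p₁ q₁ p₂ q₂ : EuclideanSpace ℝ (Fin d))
    (hp₁ : ‖p₁‖ = R') (hq₁ : ‖q₁‖ = R') (hp₂ : ‖p₂‖ = R') (hq₂ : ‖q₂‖ = R')
    (h1 : ∃ x₁ ∈ segment ℝ p₁ q₁, ‖x₁‖ ≤ R' / 5)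
    (h2 : ∃ x₂ ∈ segment ℝ p₂ q₂, ‖x₂‖ ≤ R' / 5) :
    min (dist p₁ p₂ + dist q₁ q₂) (dist p₁ q₂ + dist q₁ p₂)
      ≤ dist p₁ q₁ + dist p₂ q₂ - R' / 10 := by
  have hi1 : ⟪p₁, q₁⟫ ≤ -(23/25) * R'^2 := chord_inner_aux d R' hR' p₁ q₁ hp₁ hq₁ h1
  have hi2 : ⟪p₂, q₂⟫ ≤ -(23/25) * R'^2 := chord_inner_aux d R' hR' p₂ q₂ hp₂ hq₂ h2
  -- the chords are long
  have hL1 : 1.95 * R' ≤ dist p₁ q₁ := by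
    have hsq : (dist p₁ q₁)^2 = ‖p₁‖^2 - 2*⟪p₁,q₁⟫ + ‖q₁‖^2 := by
      rw [dist_eq_norm, norm_sub_sq_real]
    rw [hp₁, hq₁] at hsq
    nlinarith [dist_nonneg (x := p₁) (y := q₁)]
  have hL2 : 1.95 * R' ≤ dist p₂ q₂ := by
    have hsq : (dist p₂ q₂)^2 = ‖p₂‖^2 - 2*⟪p₂,q₂⟫ + ‖q₂‖^2 := by
      rw [dist_eq_norm, norm_sub_sq_real]
    rw [hp₂, hq₂] at hsq
    nlinarith [dist_nonneg (x := p₂) (y := q₂)]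
  -- p₂ + q₂ is small
  have hw : ‖p₂ + q₂‖ ≤ 2/5 * R' := by
    have hsq : ‖p₂ + q₂‖^2 = ‖p₂‖^2 + 2*⟪p₂,q₂⟫ + ‖q₂‖^2 := norm_add_sq_real p₂ q₂
    rw [hp₂, hq₂] at hsq
    nlinarith [norm_nonneg (p₂ + q₂)]
  -- one of the two inner products with p₁ is not too negative
  have hsum : -(2/5) * R'^2 ≤ ⟪p₁, p₂⟫ + ⟪p₁, q₂⟫ := by
    have h := abs_real_inner_le_norm p₁ (p₂ + q₂)
    have h' : -(‖p₁‖ * ‖p₂ + q₂‖) ≤ ⟪p₁, p₂ + q₂⟫ := neg_le_of_abs_le h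
    rw [inner_add_right] at h'
    have : ‖p₁‖ * ‖p₂ + q₂‖ ≤ R' * (2/5 * R') := by
      rw [hp₁]; exact mul_le_mul_of_nonneg_left hw (le_of_lt hR')
    nlinarith
  rcases le_or_gt (-(1/5) * R'^2) ⟪p₁, p₂⟫ with hc | hc
  · -- dist p₁ p₂ small, use first pairing
    have hpp : dist p₁ p₂ ≤ 1.55 * R' := by
      have hsq : (dist p₁ p₂)^2 = ‖p₁‖^2 - 2*⟪p₁,p₂⟫ + ‖p₂‖^2 := by
        rw [dist_eq_norm, norm_sub_sq_real]
      rw [hp₁, hp₂] at hsq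
      nlinarith [dist_nonneg (x := p₁) (y := p₂)]
    have hqq : dist q₁ q₂ ≤ 2 * R' := by
      calc dist q₁ q₂ = ‖q₁ - q₂‖ := dist_eq_norm _ _
        _ ≤ ‖q₁‖ + ‖q₂‖ := norm_sub_le _ _
        _ = 2 * R' := by rw [hq₁, hq₂]; ring
    calc min (dist p₁ p₂ + dist q₁ q₂) (dist p₁ q₂ + dist q₁ p₂)
        ≤ dist p₁ p₂ + dist q₁ q₂ := min_le_left _ _
      _ ≤ dist p₁ q₁ + dist p₂ q₂ - R' / 10 := by linarith
  · -- ⟪p₁,q₂⟫ not too negative, use second pairing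
    have hc' : -(1/5) * R'^2 ≤ ⟪p₁, q₂⟫ := by linarith
    have hpp : dist p₁ q₂ ≤ 1.55 * R' := by
      have hsq : (dist p₁ q₂)^2 = ‖p₁‖^2 - 2*⟪p₁,q₂⟫ + ‖q₂‖^2 := by
        rw [dist_eq_norm, norm_sub_sq_real]
      rw [hp₁, hq₂] at hsq
      nlinarith [dist_nonneg (x := p₁) (y := q₂)]
    have hqq : dist q₁ p₂ ≤ 2 * R' := by
      calc dist q₁ p₂ = ‖q₁ - p₂‖ := dist_eq_norm _ _
        _ ≤ ‖q₁‖ + ‖p₂‖ := norm_sub_le _ _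
        _ = 2 * R' := by rw [hq₁, hp₂]; ring
    calc min (dist p₁ p₂ + dist q₁ q₂) (dist p₁ q₂ + dist q₁ p₂)
        ≤ dist p₁ q₂ + dist q₁ p₂ := min_le_right _ _
      _ ≤ dist p₁ q₁ + dist p₂ q₂ - R' / 10 := by linarith
end
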